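/- arXiv:2201.12020 — 2 statements merged into one kernel-verified Lean document; each statement's English description precedes it below -/
import Mathlib

section
/- Let x = (x₁, x₂) ∈ ℝ^{d₁+d₂} follow an Angular Gaussian distribution AG_d(μ, Σ) with density f(x) = B · det(Σ)^{-1/2} · [(x - μ)ᵀ Σ⁻¹ (x - μ)]^{-d/2}. Then the conditional density of x₂ given x₁ (with x₁ ≠ μ₁) is proportional, as a function of x₂, to det(Σ₂₂.₁)^{-1/2} · [1 + (x₂ - μ₂.₁)ᵀ Σ₂₂.₁⁻¹ (x₂ - μ₂.₁) / q₁]^{-d/2} where q₁ = (x₁ - μ₁)ᵀ Σ₁₁⁻¹ (x₁ - μ₁); that is, x₂ | x₁ follows a multivariate t-distribution with ν = d₁ degrees of freedom, location μ₂.₁ = μ₂ + Σ₂₁ Σ₁₁⁻¹ (x₁ - μ₁), and scale matrix (q₁/d₁) · Σ₂₂.₁. -/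
open Matrix

lemma quad_decomp (d₁ d₂ : ℕ) (A : Matrix (Fin d₁) (Fin d₁) ℝ) (B : Matrix (Fin d₁) (Fin d₂) ℝ)
    (D S : Matrix (Fin d₂) (Fin d₂) ℝ)
    (hSdef : S = D - Bᵀ * A⁻¹ * B)
    (hdetA : IsUnit A.det) (hdetS : IsUnit S.det)
    (hdetM : IsUnit (Matrix.fromBlocks A B Bᵀ D).det)
    (hAsym : Aᵀ = A)
    (u : Fin d₁ → ℝ) (v w : Fin d₂ → ℝ) (hw : w = v - (Bᵀ * A⁻¹) *ᵥ u) :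
    Sum.elim u v ⬝ᵥ ((Matrix.fromBlocks A B Bᵀ D)⁻¹ *ᵥ Sum.elim u v) =
      u ⬝ᵥ (A⁻¹ *ᵥ u) + w ⬝ᵥ (S⁻¹ *ᵥ w) := by
  have h1 : A *ᵥ (A⁻¹ *ᵥ u - (A⁻¹ * B * S⁻¹) *ᵥ w) + B *ᵥ (S⁻¹ *ᵥ w) = u := by
    rw [Matrix.mulVec_sub, Matrix.mulVec_mulVec, Matrix.mulVec_mulVec,
      Matrix.mul_nonsing_inv _ hdetA, Matrix.one_mulVec,
      show A * (A⁻¹ * B * S⁻¹) = A * A⁻¹ * (B * S⁻¹) by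
        rw [Matrix.mul_assoc, Matrix.mul_assoc],
      Matrix.mul_nonsing_inv _ hdetA, Matrix.one_mul, ← Matrix.mulVec_mulVec]
    abel
  have h2 : Bᵀ *ᵥ (A⁻¹ *ᵥ u - (A⁻¹ * B * S⁻¹) *ᵥ w) + D *ᵥ (S⁻¹ *ᵥ w) = v := by
    rw [Matrix.mulVec_sub, Matrix.mulVec_mulVec, Matrix.mulVec_mulVec, Matrix.mulVec_mulVec,
      show Bᵀ * (A⁻¹ * B * S⁻¹) = (Bᵀ * A⁻¹ * B) * S⁻¹ by
        rw [Matrix.mul_assoc (Bᵀ * A⁻¹)]; rw [Matrix.mul_assoc, Matrix.mul_assoc]]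
    have hDS : (D * S⁻¹) *ᵥ w - ((Bᵀ * A⁻¹ * B) * S⁻¹) *ᵥ w = w := by
      rw [← Matrix.sub_mulVec, ← Matrix.sub_mul, ← hSdef,
        Matrix.mul_nonsing_inv _ hdetS, Matrix.one_mulVec]
    have h2' : (Bᵀ * A⁻¹) *ᵥ u - (Bᵀ * A⁻¹ * B * S⁻¹) *ᵥ w + (D * S⁻¹) *ᵥ w
        = (Bᵀ * A⁻¹) *ᵥ u + w := by
      calc (Bᵀ * A⁻¹) *ᵥ u - (Bᵀ * A⁻¹ * B * S⁻¹) *ᵥ w + (D * S⁻¹) *ᵥ w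
          = (Bᵀ * A⁻¹) *ᵥ u + ((D * S⁻¹) *ᵥ w - (Bᵀ * A⁻¹ * B * S⁻¹) *ᵥ w) := by abel
        _ = (Bᵀ * A⁻¹) *ᵥ u + w := by rw [hDS]
    rw [h2', hw]
    abel
  have hMz : (Matrix.fromBlocks A B Bᵀ D) *ᵥ
      Sum.elim (A⁻¹ *ᵥ u - (A⁻¹ * B * S⁻¹) *ᵥ w) (S⁻¹ *ᵥ w) = Sum.elim u v := by
    rw [Matrix.fromBlocks_mulVec]
    simp only [Sum.elim_comp_inl, Sum.elim_comp_inr]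
    rw [h1, h2]
  have hzinv : (Matrix.fromBlocks A B Bᵀ D)⁻¹ *ᵥ Sum.elim u v
      = Sum.elim (A⁻¹ *ᵥ u - (A⁻¹ * B * S⁻¹) *ᵥ w) (S⁻¹ *ᵥ w) := by
    rw [← hMz, Matrix.mulVec_mulVec, Matrix.nonsing_inv_mul _ hdetM, Matrix.one_mulVec]
  rw [hzinv, sumElim_dotProduct_sumElim]
  have hcancel : ((Bᵀ * A⁻¹) *ᵥ u) ⬝ᵥ (S⁻¹ *ᵥ w) = u ⬝ᵥ ((A⁻¹ * B * S⁻¹) *ᵥ w) := by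
    rw [dotProduct_comm, Matrix.dotProduct_mulVec, ← Matrix.mulVec_transpose,
      Matrix.transpose_mul, Matrix.transpose_nonsing_inv, hAsym, Matrix.transpose_transpose,
      dotProduct_comm]
    simp [Matrix.mulVec_mulVec, Matrix.mul_assoc]
  have hv : v = w + (Bᵀ * A⁻¹) *ᵥ u := by rw [hw]; abel
  rw [dotProduct_sub, hv, add_dotProduct, hcancel]
  ring

/-- The conditional density of x₂ given x₁ under the Angular
Gaussian AG_d(μ,Σ) is proportional, as a function of x₂, to the multivariate
t-density with ν = d₁ degrees of freedom, location μ₂.₁ = μ₂ + Σ₂₁Σ₁₁⁻¹(x₁-μ₁)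
and scale matrix (q₁/d₁)·Σ₂₂.₁, where q₁ = (x₁-μ₁)ᵀΣ₁₁⁻¹(x₁-μ₁). -/
theorem angular_gaussian_conditional_is_student
    (d₁ d₂ : ℕ) (hd₁ : 1 ≤ d₁) (hd₂ : 1 ≤ d₂)
    (A : Matrix (Fin d₁) (Fin d₁) ℝ) (B : Matrix (Fin d₁) (Fin d₂) ℝ)
    (D : Matrix (Fin d₂) (Fin d₂) ℝ)
    (hSg : (Matrix.fromBlocks A B Bᵀ D).PosDef)
    (Bnorm : ℝ) (hBnorm : 0 < Bnorm)
    (μ₁ x₁ : Fin d₁ → ℝ) (μ₂ : Fin d₂ → ℝ) (hx₁ : x₁ ≠ μ₁)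
    (f : (Fin d₁ ⊕ Fin d₂ → ℝ) → ℝ)
    (hf : ∀ x : Fin d₁ ⊕ Fin d₂ → ℝ, f x =
      Bnorm * (Matrix.fromBlocks A B Bᵀ D).det ^ (-(1:ℝ)/2) *
        ((x - Sum.elim μ₁ μ₂) ⬝ᵥ
          ((Matrix.fromBlocks A B Bᵀ D)⁻¹ *ᵥ (x - Sum.elim μ₁ μ₂))) ^
            (-((d₁ : ℝ) + d₂) / 2))
    (q₁ : ℝ) (hq₁ : q₁ = (x₁ - μ₁) ⬝ᵥ (A⁻¹ *ᵥ (x₁ - μ₁)))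
    (μcond : Fin d₂ → ℝ) (hμcond : μcond = μ₂ + (Bᵀ * A⁻¹) *ᵥ (x₁ - μ₁))
    (Scond : Matrix (Fin d₂) (Fin d₂) ℝ)
    (hScond : Scond = (q₁ / d₁) • (D - Bᵀ * A⁻¹ * B)) :
    ∃ c : ℝ, 0 < c ∧ ∀ x₂ : Fin d₂ → ℝ,
      f (Sum.elim x₁ x₂) =
        c * (D - Bᵀ * A⁻¹ * B).det ^ (-(1:ℝ)/2) *
          (1 + ((d₁ : ℝ))⁻¹ * ((x₂ - μcond) ⬝ᵥ (Scond⁻¹ *ᵥ (x₂ - μcond)))) ^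
            (-(((d₁ : ℝ)) + d₂) / 2) := by
  classical
  obtain ⟨hAh, -, -, hDh⟩ := Matrix.isHermitian_fromBlocks_iff.mp hSg.1
  have hAsym : Aᵀ = A := by
    rw [← Matrix.conjTranspose_eq_transpose_of_trivial]; exact hAh
  -- A is positive definite
  have hA : A.PosDef := by
    refine Matrix.PosDef.of_dotProduct_mulVec_pos hAh (fun u hu => ?_)
    have h := hSg.dotProduct_mulVec_pos (x := Sum.elim u 0) (by
      intro h; apply hu; funext i; exact congrFun h (Sum.inl i))
    simpa [Function.star_sumElim, Matrix.fromBlocks_mulVec,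
      sumElim_dotProduct_sumElim] using h
  haveI : Invertible A := hA.isUnit.invertible
  -- the Schur complement is positive definite
  have hS : (D - Bᵀ * A⁻¹ * B).PosDef := by
    refine Matrix.PosDef.of_dotProduct_mulVec_pos ?_ ?_
    · show _ᴴ = _
      rw [Matrix.conjTranspose_eq_transpose_of_trivial]
      simp [Matrix.transpose_sub, Matrix.transpose_mul, Matrix.transpose_nonsing_inv, hAsym,
        show Dᵀ = D by rw [← Matrix.conjTranspose_eq_transpose_of_trivial]; exact hDh,
        Matrix.mul_assoc]
    · intro y hy
      have key := Matrix.schur_complement_eq₁₁ (A := A) B D (-((A⁻¹ * B) *ᵥ y)) y hAh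
      rw [Matrix.conjTranspose_eq_transpose_of_trivial] at key
      have h := hSg.dotProduct_mulVec_pos (x := Sum.elim (-((A⁻¹ * B) *ᵥ y)) y) (by
        intro h; apply hy; funext i; exact congrFun h (Sum.inr i))
      rw [Matrix.dotProduct_mulVec] at h
      rw [show Sum.elim (-((A⁻¹ * B) *ᵥ y)) y = (-((A⁻¹ * B) *ᵥ y)) ⊕ᵥ y from rfl] at h
      rw [key] at h
      simpa [Matrix.dotProduct_mulVec] using h
  have hdetA : IsUnit A.det := isUnit_iff_ne_zero.mpr hA.det_pos.ne'
  have hdetS : IsUnit (D - Bᵀ * A⁻¹ * B).det := isUnit_iff_ne_zero.mpr hS.det_pos.ne'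
  have hdetM : IsUnit (Matrix.fromBlocks A B Bᵀ D).det :=
    isUnit_iff_ne_zero.mpr hSg.det_pos.ne'
  -- q₁ > 0
  have hq₁pos : 0 < q₁ := by
    have hu : x₁ - μ₁ ≠ 0 := sub_ne_zero.mpr hx₁
    have h := hA.inv.dotProduct_mulVec_pos hu
    rw [hq₁]
    simpa using h
  have hd₁' : (0:ℝ) < (d₁ : ℝ) := by exact_mod_cast Nat.lt_of_lt_of_le Nat.zero_lt_one hd₁
  -- the constant
  set e : ℝ := -((d₁ : ℝ) + d₂) / 2 with he
  refine ⟨Bnorm * (Matrix.fromBlocks A B Bᵀ D).det ^ (-(1:ℝ)/2) *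
    (D - Bᵀ * A⁻¹ * B).det ^ ((1:ℝ)/2) * q₁ ^ e, ?_, ?_⟩
  · have h1 : (0:ℝ) < (Matrix.fromBlocks A B Bᵀ D).det ^ (-(1:ℝ)/2) :=
      Real.rpow_pos_of_pos hSg.det_pos _
    have h2 : (0:ℝ) < (D - Bᵀ * A⁻¹ * B).det ^ ((1:ℝ)/2) :=
      Real.rpow_pos_of_pos hS.det_pos _
    have h3 : (0:ℝ) < q₁ ^ e := Real.rpow_pos_of_pos hq₁pos _
    positivity
  intro x₂
  -- quadratic form decomposition
  have hvec : Sum.elim x₁ x₂ - Sum.elim μ₁ μ₂ = Sum.elim (x₁ - μ₁) (x₂ - μ₂) := by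
    funext i; cases i <;> rfl
  have hw : x₂ - μcond = (x₂ - μ₂) - (Bᵀ * A⁻¹) *ᵥ (x₁ - μ₁) := by
    rw [hμcond]; abel
  have hquad := quad_decomp d₁ d₂ A B D (D - Bᵀ * A⁻¹ * B) rfl hdetA hdetS hdetM hAsym
    (x₁ - μ₁) (x₂ - μ₂) (x₂ - μcond) hw
  -- abbreviations
  set Qw : ℝ := (x₂ - μcond) ⬝ᵥ ((D - Bᵀ * A⁻¹ * B)⁻¹ *ᵥ (x₂ - μcond)) with hQw
  have hQwpos : 0 ≤ Qw := by
    have h := hS.inv.posSemidef.dotProduct_mulVec_nonneg (x₂ - μcond)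
    simpa [hQw] using h
  -- compute inverse of Scond
  have hk : (q₁ / (d₁:ℝ)) ≠ 0 := by positivity
  haveI : Invertible (q₁ / (d₁:ℝ)) := invertibleOfNonzero hk
  have hScondinv : Scond⁻¹ = (q₁ / (d₁:ℝ))⁻¹ • (D - Bᵀ * A⁻¹ * B)⁻¹ := by
    rw [hScond, Matrix.inv_smul (D - Bᵀ * A⁻¹ * B) (q₁ / (d₁:ℝ)) hdetS, invOf_eq_inv]
  have hdot : (x₂ - μcond) ⬝ᵥ (Scond⁻¹ *ᵥ (x₂ - μcond)) = (q₁ / (d₁:ℝ))⁻¹ * Qw := by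
    rw [hScondinv, Matrix.smul_mulVec, dotProduct_smul, hQw, smul_eq_mul]
  -- the base equality
  have hbase : 1 + ((d₁ : ℝ))⁻¹ * ((x₂ - μcond) ⬝ᵥ (Scond⁻¹ *ᵥ (x₂ - μcond)))
      = (q₁ + Qw) / q₁ := by
    rw [hdot]
    field_simp
  rw [hf, hvec, hquad, ← hq₁, hbase]
  have hsplit : (q₁ + Qw) ^ e = q₁ ^ e * ((q₁ + Qw) / q₁) ^ e := by
    rw [← Real.mul_rpow hq₁pos.le (div_nonneg (by linarith) hq₁pos.le),
      mul_div_cancel₀ _ hq₁pos.ne']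
  have hone : (D - Bᵀ * A⁻¹ * B).det ^ ((1:ℝ)/2) * (D - Bᵀ * A⁻¹ * B).det ^ (-(1:ℝ)/2)
      = 1 := by
    rw [← Real.rpow_add hS.det_pos]
    norm_num
  calc Bnorm * (Matrix.fromBlocks A B Bᵀ D).det ^ (-(1:ℝ)/2) * (q₁ + Qw) ^ e
      = Bnorm * (Matrix.fromBlocks A B Bᵀ D).det ^ (-(1:ℝ)/2) *
          (q₁ ^ e * ((q₁ + Qw) / q₁) ^ e) := by rw [hsplit]
    _ = Bnorm * (Matrix.fromBlocks A B Bᵀ D).det ^ (-(1:ℝ)/2) * q₁ ^ e *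
          ((q₁ + Qw) / q₁) ^ e *
          ((D - Bᵀ * A⁻¹ * B).det ^ ((1:ℝ)/2) * (D - Bᵀ * A⁻¹ * B).det ^ (-(1:ℝ)/2)) := by
        rw [hone]; ring
    _ = Bnorm * (Matrix.fromBlocks A B Bᵀ D).det ^ (-(1:ℝ)/2) *
          (D - Bᵀ * A⁻¹ * B).det ^ ((1:ℝ)/2) * q₁ ^ e *
          (D - Bᵀ * A⁻¹ * B).det ^ (-(1:ℝ)/2) * ((q₁ + Qw) / q₁) ^ e := by ring
end

section
/- The marginal density of the first d₁ coordinates of an Angular Gaussian AG_d(μ, Σ) random vector is itself Angular Gaussian: if x has density proportional to det(Σ)^{-1/2} [(x-μ)ᵀΣ⁻¹(x-μ)]^{-d/2} on ℝ^d, then x₁ has density proportional to det(Σ₁₁)^{-1/2} [(x₁-μ₁)ᵀΣ₁₁⁻¹(x₁-μ₁)]^{-d₁/2} on ℝ^{d₁}, obtained by integrating out x₂ using the quadratic-form decomposition and the normalization of the multivariate t-density. -/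
open Matrix MeasureTheory Module

lemma ag_norm_sq_le_dot (d₂ : ℕ) (z : Fin d₂ → ℝ) : ‖z‖ ^ 2 ≤ z ⬝ᵥ z := by
  rcases isEmpty_or_nonempty (Fin d₂) with h | h
  · simp [dotProduct, norm_le_zero_iff.mpr, Subsingleton.elim z 0]
  · obtain ⟨i, -, hi⟩ := Finset.exists_mem_eq_sup Finset.univ
      ⟨Classical.arbitrary _, Finset.mem_univ _⟩ (fun i => ‖z i‖₊)
    have hz : ‖z‖ = |z i| := by rw [← Real.norm_eq_abs]; simp [Pi.norm_def, hi]
    rw [hz, show |z i| ^ 2 = z i * z i by rw [sq_abs, sq]]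
    exact Finset.single_le_sum (f := fun j => z j * z j)
      (fun j _ => mul_self_nonneg _) (Finset.mem_univ i)

lemma ag_dot_self_nonneg {d₂ : ℕ} (z : Fin d₂ → ℝ) : 0 ≤ z ⬝ᵥ z :=
  Finset.sum_nonneg fun _ _ => mul_self_nonneg _

lemma ag_aux_integrable (d₁ d₂ : ℕ) (hd₁ : 1 ≤ d₁) :
    Integrable (fun z : Fin d₂ → ℝ => (1 + z ⬝ᵥ z) ^ (-((d₁:ℝ) + d₂) / 2)) := by
  have hnr : (finrank ℝ (Fin d₂ → ℝ) : ℝ) < (d₁ : ℝ) + d₂ := by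
    simp only [finrank_fintype_fun_eq_card, Fintype.card_fin]
    have : (1 : ℝ) ≤ d₁ := by exact_mod_cast hd₁
    linarith
  refine (integrable_rpow_neg_one_add_norm_sq hnr).mono' ?_
    (Filter.Eventually.of_forall fun z => ?_)
  · apply Measurable.aestronglyMeasurable
    unfold dotProduct
    fun_prop
  · have h1 : (0:ℝ) < 1 + ‖z‖ ^ 2 := by positivity
    have h2 : 1 + ‖z‖ ^ 2 ≤ 1 + z ⬝ᵥ z := by linarith [ag_norm_sq_le_dot d₂ z]
    rw [Real.norm_eq_abs,
      abs_of_pos (Real.rpow_pos_of_pos (by linarith [ag_dot_self_nonneg z]) _)]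
    exact Real.rpow_le_rpow_of_nonpos h1 h2 (by
      have : (0:ℝ) ≤ (d₁:ℝ) + d₂ := by positivity
      linarith)

lemma ag_aux_pos (d₁ d₂ : ℕ) (hd₁ : 1 ≤ d₁) :
    0 < ∫ z : Fin d₂ → ℝ, (1 + z ⬝ᵥ z) ^ (-((d₁:ℝ) + d₂) / 2) := by
  rw [integral_pos_iff_support_of_nonneg
    (fun z => Real.rpow_nonneg (by linarith [ag_dot_self_nonneg z]) _)
    (ag_aux_integrable d₁ d₂ hd₁)]
  have hsupp : Function.support
      (fun z : Fin d₂ → ℝ => (1 + z ⬝ᵥ z) ^ (-((d₁:ℝ) + d₂) / 2)) = Set.univ := by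
    ext z
    simp only [Function.mem_support, Set.mem_univ, iff_true]
    exact (Real.rpow_pos_of_pos (by linarith [ag_dot_self_nonneg z]) _).ne'
  rw [hsupp]
  exact isOpen_univ.measure_pos volume ⟨0, trivial⟩

lemma ag_dot_swap {m n : Type*} [Fintype m] [Fintype n]
    (M : Matrix m n ℝ) (x : m → ℝ) (y : n → ℝ) :
    (Mᵀ *ᵥ x) ⬝ᵥ y = x ⬝ᵥ M *ᵥ y := by
  rw [dotProduct_mulVec, mulVec_transpose]

lemma ag_dot_swap' {m n : Type*} [Fintype m] [Fintype n]
    (M : Matrix m n ℝ) (x : n → ℝ) (y : m → ℝ) :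
    (M *ᵥ x) ⬝ᵥ y = x ⬝ᵥ Mᵀ *ᵥ y := by
  rw [← ag_dot_swap Mᵀ x y, transpose_transpose]

lemma ag_integral_mulVec_right {d : ℕ} (M : Matrix (Fin d) (Fin d) ℝ) (hM : M.det ≠ 0)
    (G : (Fin d → ℝ) → ℝ) (hG : Measurable G) :
    ∫ w : Fin d → ℝ, G w = |M.det| * ∫ z : Fin d → ℝ, G (M *ᵥ z) := by
  have hmap := Real.map_matrix_volume_pi_eq_smul_volume_pi hM
  have h1 : ∫ z : Fin d → ℝ, G (M *ᵥ z)
      = ∫ w, G w ∂(Measure.map (Matrix.toLin' M) volume) := by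
    rw [integral_map ((Matrix.toLin' M).continuous_of_finiteDimensional.measurable.aemeasurable)
      hG.aestronglyMeasurable]
    simp only [Matrix.toLin'_apply]
  rw [h1, hmap, integral_smul_measure, ENNReal.toReal_ofReal (by positivity), smul_eq_mul,
    ← mul_assoc, abs_inv, mul_inv_cancel₀ (by simpa using hM), one_mul]

/-- The marginal of an Angular Gaussian is Angular Gaussian:
integrating the (unnormalized) AG density over x₂ yields, up to a constant
c > 0 depending only on d₁ and d₂, the unnormalized AG density of x₁. -/
theorem angular_gaussian_marginal
    (d₁ d₂ : ℕ) (hd₁ : 1 ≤ d₁) :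
    ∃ c : ℝ, 0 < c ∧
      ∀ (A : Matrix (Fin d₁) (Fin d₁) ℝ) (B : Matrix (Fin d₁) (Fin d₂) ℝ)
        (D : Matrix (Fin d₂) (Fin d₂) ℝ),
        (Matrix.fromBlocks A B Bᵀ D).PosDef →
        ∀ (μ₁ x₁ : Fin d₁ → ℝ) (μ₂ : Fin d₂ → ℝ), x₁ ≠ μ₁ →
          (∫ x₂ : Fin d₂ → ℝ,
              (Matrix.fromBlocks A B Bᵀ D).det ^ (-(1:ℝ)/2) *
                ((Sum.elim x₁ x₂ - Sum.elim μ₁ μ₂) ⬝ᵥ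
                  ((Matrix.fromBlocks A B Bᵀ D)⁻¹ *ᵥ
                    (Sum.elim x₁ x₂ - Sum.elim μ₁ μ₂))) ^
                  (-((d₁ : ℝ) + d₂) / 2)) =
            c * A.det ^ (-(1:ℝ)/2) *
              ((x₁ - μ₁) ⬝ᵥ (A⁻¹ *ᵥ (x₁ - μ₁))) ^ (-(d₁ : ℝ) / 2) := by
  refine ⟨∫ z : Fin d₂ → ℝ, (1 + z ⬝ᵥ z) ^ (-((d₁:ℝ) + d₂) / 2),
    ag_aux_pos d₁ d₂ hd₁, ?_⟩
  intro A B D hSig μ₁ x₁ μ₂ hx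
  set c : ℝ := ∫ z : Fin d₂ → ℝ, (1 + z ⬝ᵥ z) ^ (-((d₁:ℝ) + d₂) / 2) with hc_def
  set p : ℝ := -((d₁ : ℝ) + d₂) / 2 with hp_def
  -- A is positive definite
  have hA : A.PosDef := by
    obtain ⟨hherm, hpos⟩ := posDef_iff_dotProduct_mulVec.mp hSig
    refine posDef_iff_dotProduct_mulVec.mpr ⟨(isHermitian_fromBlocks_iff.mp hherm).1, fun ⦃v⦄ hv => ?_⟩
    have hne : Sum.elim v 0 ≠ (0 : Fin d₁ ⊕ Fin d₂ → ℝ) := by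
      intro h
      exact hv (funext fun i => congrFun h (Sum.inl i))
    have := hpos hne
    simpa [fromBlocks_mulVec, sumElim_dotProduct_sumElim] using this
  have hdetA : 0 < A.det := hA.det_pos
  have hdA : IsUnit A.det := isUnit_iff_ne_zero.mpr hdetA.ne'
  letI : Invertible A := A.invertibleOfIsUnitDet hdA
  -- symmetry facts
  have hAt : Aᵀ = A := by
    have := hA.1
    rwa [Matrix.IsHermitian, conjTranspose_eq_transpose_of_trivial] at this
  have hAit : (A⁻¹)ᵀ = A⁻¹ := by rw [Matrix.transpose_nonsing_inv, hAt]
  set S : Matrix (Fin d₂) (Fin d₂) ℝ := D - Bᵀ * A⁻¹ * B with hS_def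
  have hDt : Dᵀ = D := by
    have := (isHermitian_fromBlocks_iff.mp hSig.1).2.2.2
    rwa [Matrix.IsHermitian, conjTranspose_eq_transpose_of_trivial] at this
  have hSt : Sᵀ = S := by
    rw [hS_def, Matrix.transpose_sub, hDt, Matrix.transpose_mul, Matrix.transpose_mul,
      transpose_transpose, hAit, Matrix.mul_assoc]
  -- determinant of block matrix
  have hdetSig : 0 < (Matrix.fromBlocks A B Bᵀ D).det := hSig.det_pos
  have hdet : (Matrix.fromBlocks A B Bᵀ D).det = A.det * S.det :=
    Matrix.det_fromBlocks₁₁ A B Bᵀ D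
  have hdetS : 0 < S.det := by
    rcases lt_trichotomy S.det 0 with h | h | h
    · nlinarith
    · rw [hdet, h, mul_zero] at hdetSig; exact absurd hdetSig (lt_irrefl 0)
    · exact h
  have hdS : IsUnit S.det := isUnit_iff_ne_zero.mpr hdetS.ne'
  have hSit : (S⁻¹)ᵀ = S⁻¹ := by rw [Matrix.transpose_nonsing_inv, hSt]
  -- S is positive semidefinite, and its square root T
  have hS_psd : S.PosSemidef := by
    have h := (Matrix.PosDef.fromBlocks₁₁ B D hA).mp
    rw [conjTranspose_eq_transpose_of_trivial] at h
    exact h hSig.posSemidef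
  open scoped MatrixOrder in
  set T : Matrix (Fin d₂) (Fin d₂) ℝ := CFC.sqrt S with hT_def
  open scoped MatrixOrder in
  have hT_psd : T.PosSemidef := Matrix.nonneg_iff_posSemidef.mp (CFC.sqrt_nonneg S)
  open scoped MatrixOrder in
  have hTmul : T * T = S := CFC.sqrt_mul_sqrt_self S hS_psd.nonneg
  have hTt : Tᵀ = T := by
    have := hT_psd.1
    rwa [Matrix.IsHermitian, conjTranspose_eq_transpose_of_trivial] at this
  have hdetT_sq : T.det * T.det = S.det := by rw [← Matrix.det_mul, hTmul]
  have hdetT_nonneg : 0 ≤ T.det := by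
    rw [hT_psd.1.det_eq_prod_eigenvalues]
    refine Finset.prod_nonneg fun i _ => ?_
    simpa using hT_psd.eigenvalues_nonneg i
  have hdetT : 0 < T.det := by
    rcases eq_or_lt_of_le hdetT_nonneg with h | h
    · rw [← h, mul_zero] at hdetT_sq; exact absurd hdetT_sq.symm hdetS.ne'
    · exact h
  have hdT : IsUnit T.det := isUnit_iff_ne_zero.mpr hdetT.ne'
  -- the vector and positive quadratic form q₁
  set v₁ : Fin d₁ → ℝ := x₁ - μ₁ with hv₁_def
  have hv₁ : v₁ ≠ 0 := sub_ne_zero.mpr hx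
  have hq : 0 < v₁ ⬝ᵥ A⁻¹ *ᵥ v₁ := by
    have := hA.inv.dotProduct_mulVec_pos hv₁
    simpa using this
  set q₁ : ℝ := v₁ ⬝ᵥ A⁻¹ *ᵥ v₁ with hq₁_def
  -- block inverse formula
  letI : Invertible S := S.invertibleOfIsUnitDet hdS
  letI : Invertible (D - Bᵀ * ⅟A * B) := by
    rw [invOf_eq_nonsing_inv]; infer_instance
  letI : Invertible (Matrix.fromBlocks A B Bᵀ D) :=
    (Matrix.fromBlocks A B Bᵀ D).invertibleOfIsUnitDet (isUnit_iff_ne_zero.mpr hdetSig.ne')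
  have hinv : (Matrix.fromBlocks A B Bᵀ D)⁻¹ =
      Matrix.fromBlocks
        (A⁻¹ + A⁻¹ * B * S⁻¹ * Bᵀ * A⁻¹)
        (-(A⁻¹ * B * S⁻¹))
        (-(S⁻¹ * Bᵀ * A⁻¹))
        S⁻¹ := by
    have h := invOf_fromBlocks₁₁_eq A B Bᵀ D
    rw [← invOf_eq_nonsing_inv, h]
    simp only [invOf_eq_nonsing_inv]
    rfl
  -- rewrite the inverse as fromBlocks P B' B'ᵀ S⁻¹
  set P : Matrix (Fin d₁) (Fin d₁) ℝ := A⁻¹ + A⁻¹ * B * S⁻¹ * Bᵀ * A⁻¹ with hP_def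
  set B' : Matrix (Fin d₁) (Fin d₂) ℝ := -(A⁻¹ * B * S⁻¹) with hB'_def
  have hB't : B'ᵀ = -(S⁻¹ * Bᵀ * A⁻¹) := by
    rw [hB'_def, Matrix.transpose_neg, Matrix.transpose_mul, Matrix.transpose_mul,
      hAit, hSit, Matrix.mul_assoc]
  have hinv' : (Matrix.fromBlocks A B Bᵀ D)⁻¹ = Matrix.fromBlocks P B' B'ᵀ S⁻¹ := by
    rw [hinv, hB't]
  -- invertibility of S⁻¹
  letI : Invertible S⁻¹ := (S⁻¹).invertibleOfIsUnitDet
    (by rw [Matrix.det_nonsing_inv, Ring.inverse_eq_inv]; exact hdS.inv)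
  have hSi_herm : (S⁻¹).IsHermitian := by
    rw [Matrix.IsHermitian, conjTranspose_eq_transpose_of_trivial, hSit]
  -- the matrix simplifications
  have hSB : (S⁻¹)⁻¹ * B'ᵀ = -(Bᵀ * A⁻¹) := by
    rw [Matrix.nonsing_inv_nonsing_inv S hdS, hB't, Matrix.mul_neg, ← Matrix.mul_assoc,
      ← Matrix.mul_assoc, Matrix.mul_nonsing_inv S hdS, Matrix.one_mul]
  have hPB : P - B' * (S⁻¹)⁻¹ * B'ᵀ = A⁻¹ := by
    rw [Matrix.nonsing_inv_nonsing_inv S hdS, hP_def, hB'_def, hB't]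
    simp only [Matrix.neg_mul, Matrix.mul_neg, neg_neg]
    have hcancel : A⁻¹ * B * S⁻¹ * S * (S⁻¹ * Bᵀ * A⁻¹) = A⁻¹ * B * S⁻¹ * Bᵀ * A⁻¹ := by
      rw [Matrix.nonsing_inv_mul_cancel_right _ _ hdS]
      simp only [Matrix.mul_assoc]
    rw [hcancel]
    abel
  -- the quadratic identity
  have key : ∀ x₂ : Fin d₂ → ℝ,
      (Sum.elim x₁ x₂ - Sum.elim μ₁ μ₂) ⬝ᵥ
        ((Matrix.fromBlocks A B Bᵀ D)⁻¹ *ᵥ (Sum.elim x₁ x₂ - Sum.elim μ₁ μ₂)) =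
      q₁ + (x₂ - (μ₂ + (Bᵀ * A⁻¹) *ᵥ v₁)) ⬝ᵥ S⁻¹ *ᵥ (x₂ - (μ₂ + (Bᵀ * A⁻¹) *ᵥ v₁)) := by
    intro x₂
    have helim : Sum.elim x₁ x₂ - Sum.elim μ₁ μ₂ = Sum.elim v₁ (x₂ - μ₂) := by
      funext i
      cases i <;> simp [hv₁_def]
    rw [helim, hinv']
    have h := Matrix.schur_complement_eq₂₂ (α := ℝ) P B' (D := S⁻¹) v₁ (x₂ - μ₂) hSi_herm
    simp only [star_trivial, Matrix.conjTranspose_eq_transpose_of_trivial,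
      ← Matrix.dotProduct_mulVec] at h
    rw [h, hSB, hPB]
    have harg : (-(Bᵀ * A⁻¹)) *ᵥ v₁ + (x₂ - μ₂) = x₂ - (μ₂ + (Bᵀ * A⁻¹) *ᵥ v₁) := by
      rw [Matrix.neg_mulVec]
      abel
    rw [harg, add_comm]
  -- rewrite the integrand
  have hfun : (fun x₂ : Fin d₂ → ℝ =>
      (Matrix.fromBlocks A B Bᵀ D).det ^ (-(1:ℝ)/2) *
        ((Sum.elim x₁ x₂ - Sum.elim μ₁ μ₂) ⬝ᵥ
          ((Matrix.fromBlocks A B Bᵀ D)⁻¹ *ᵥ (Sum.elim x₁ x₂ - Sum.elim μ₁ μ₂))) ^ p) =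
      fun x₂ : Fin d₂ → ℝ =>
        (fun w : Fin d₂ → ℝ => (Matrix.fromBlocks A B Bᵀ D).det ^ (-(1:ℝ)/2) *
          (q₁ + w ⬝ᵥ S⁻¹ *ᵥ w) ^ p) (x₂ - (μ₂ + (Bᵀ * A⁻¹) *ᵥ v₁)) := by
    funext x₂
    rw [key x₂]
  rw [hfun, integral_sub_right_eq_self (μ := volume)
    (fun w : Fin d₂ → ℝ => (Matrix.fromBlocks A B Bᵀ D).det ^ (-(1:ℝ)/2) *
      (q₁ + w ⬝ᵥ S⁻¹ *ᵥ w) ^ p) (μ₂ + (Bᵀ * A⁻¹) *ᵥ v₁)]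
  -- change of variables w = M *ᵥ z with M = √q₁ • T
  set M : Matrix (Fin d₂) (Fin d₂) ℝ := Real.sqrt q₁ • T with hM_def
  have hdetM : M.det = Real.sqrt q₁ ^ d₂ * T.det := by
    rw [hM_def, Matrix.det_smul, Fintype.card_fin]
  have hsq : 0 < Real.sqrt q₁ := Real.sqrt_pos.mpr hq
  have hdetM_pos : 0 < M.det := by
    rw [hdetM]; positivity
  have hGmeas : Measurable (fun w : Fin d₂ → ℝ =>
      (Matrix.fromBlocks A B Bᵀ D).det ^ (-(1:ℝ)/2) * (q₁ + w ⬝ᵥ S⁻¹ *ᵥ w) ^ p) := by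
    unfold dotProduct Matrix.mulVec dotProduct
    fun_prop
  rw [ag_integral_mulVec_right M hdetM_pos.ne' _ hGmeas]
  -- simplify the integrand after the change of variables
  have hTS : T * (S⁻¹ * T) = 1 := by
    rw [← hTmul, Matrix.mul_inv_rev, Matrix.mul_assoc T⁻¹ T⁻¹ T,
      Matrix.nonsing_inv_mul T hdT, Matrix.mul_one, Matrix.mul_nonsing_inv T hdT]
  have hquad : ∀ z : Fin d₂ → ℝ, (M *ᵥ z) ⬝ᵥ S⁻¹ *ᵥ (M *ᵥ z) = q₁ * (z ⬝ᵥ z) := by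
    intro z
    have hbase : (T *ᵥ z) ⬝ᵥ S⁻¹ *ᵥ (T *ᵥ z) = z ⬝ᵥ z := by
      rw [ag_dot_swap' T z (S⁻¹ *ᵥ (T *ᵥ z)), hTt]
      simp only [mulVec_mulVec]
      rw [hTS, Matrix.one_mulVec]
    rw [hM_def, Matrix.smul_mulVec, smul_dotProduct, Matrix.mulVec_smul,
      dotProduct_smul, smul_eq_mul, smul_eq_mul, ← mul_assoc,
      Real.mul_self_sqrt hq.le, hbase]
  have hfun2 : (fun z : Fin d₂ → ℝ =>
      (Matrix.fromBlocks A B Bᵀ D).det ^ (-(1:ℝ)/2) * (q₁ + (M *ᵥ z) ⬝ᵥ S⁻¹ *ᵥ (M *ᵥ z)) ^ p) =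
      fun z : Fin d₂ → ℝ =>
        ((Matrix.fromBlocks A B Bᵀ D).det ^ (-(1:ℝ)/2) * q₁ ^ p) * (1 + z ⬝ᵥ z) ^ p := by
    funext z
    rw [hquad z, show q₁ + q₁ * (z ⬝ᵥ z) = q₁ * (1 + z ⬝ᵥ z) by ring,
      Real.mul_rpow hq.le (by linarith [ag_dot_self_nonneg z]), mul_assoc]
  rw [hfun2, integral_const_mul, ← hc_def]
  -- final bookkeeping with the constants
  have e1 : (Matrix.fromBlocks A B Bᵀ D).det ^ (-(1:ℝ)/2)
      = A.det ^ (-(1:ℝ)/2) * S.det ^ (-(1:ℝ)/2) := by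
    rw [hdet, Real.mul_rpow hdetA.le hdetS.le]
  have e2 : T.det * S.det ^ (-(1:ℝ)/2) = S.det ^ ((1:ℝ)/2) * S.det ^ (-(1:ℝ)/2) := by
    congr 1
    rw [← Real.sqrt_eq_rpow, ← hdetT_sq, Real.sqrt_mul_self hdetT_nonneg]
  have e2' : S.det ^ ((1:ℝ)/2) * S.det ^ (-(1:ℝ)/2) = 1 := by
    rw [← Real.rpow_add hdetS]
    norm_num
  have e3 : Real.sqrt q₁ ^ d₂ * q₁ ^ p = q₁ ^ (-(d₁:ℝ)/2) := by
    rw [Real.sqrt_eq_rpow, ← Real.rpow_natCast (q₁ ^ ((1:ℝ)/2)) d₂, ← Real.rpow_mul hq.le,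
      ← Real.rpow_add hq, hp_def]
    congr 1
    ring
  rw [abs_of_pos hdetM_pos, hdetM, e1]
  calc Real.sqrt q₁ ^ d₂ * T.det * (A.det ^ (-(1:ℝ)/2) * S.det ^ (-(1:ℝ)/2) * q₁ ^ p * c)
      = (T.det * S.det ^ (-(1:ℝ)/2)) * (Real.sqrt q₁ ^ d₂ * q₁ ^ p) *
          (A.det ^ (-(1:ℝ)/2) * c) := by ring
    _ = c * A.det ^ (-(1:ℝ)/2) * q₁ ^ (-(d₁:ℝ)/2) := by
        rw [e2, e2', e3]; ring
end
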